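/- Chain-telescoping achievability: let rank: 2^M → ℤ be a submodular rank function of vector sets with N = rank(M), and fix user 1. For any permutation j(2),...,j(m) of M∖{1}, define R_{j(t)} = rank({1,j(2),...,j(t)}) − rank({1,j(2),...,j(t−1)}) for t = 2,...,m (and R_1 arbitrary). Then for each t = 2,...,m, Σ_{s=t}^{m} R_{j(s)} = N − rank({1,j(2),...,j(t−1)}), and consequently the vector R satisfies Σ_{i∈S} R_i ≥ N − rank(M∖S) for every S ⊆ M with 1 ∉ S. -/

import Mathlib

open Finset

section helpers
variable {F V : Type*} [Field F] [AddCommGroup V] [Module F V] [FiniteDimensional F V]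
  {m : ℕ} {A : Fin m → Finset V} {rank : Finset (Fin m) → ℤ}
  (hrank : ∀ S : Finset (Fin m),
    rank S = (Module.finrank F
      (Submodule.span F (⋃ i ∈ (S : Set (Fin m)), (A i : Set V))) : ℤ))

include hrank

lemma rank_mono' {S T : Finset (Fin m)} (h : S ⊆ T) : rank S ≤ rank T := by
  rw [hrank, hrank]
  exact_mod_cast Submodule.finrank_mono (Submodule.span_mono
    (Set.biUnion_subset_biUnion_left (by exact_mod_cast h)))

lemma rank_pair' {X Y Z W : Finset (Fin m)} (hZ : Z ⊆ X ∪ Y) (hW : W ⊆ X ∩ Y) :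
    rank Z + rank W ≤ rank X + rank Y := by
  have h1 : rank Z ≤ rank (X ∪ Y) := rank_mono' hrank hZ
  have h2 : rank W ≤ rank (X ∩ Y) := rank_mono' hrank hW
  have h3 : rank (X ∪ Y) + rank (X ∩ Y) ≤ rank X + rank Y := by
    rw [hrank, hrank, hrank, hrank]
    have hu : (⋃ i ∈ ((X ∪ Y : Finset (Fin m)) : Set (Fin m)), (A i : Set V))
        = (⋃ i ∈ (X : Set (Fin m)), (A i : Set V)) ∪ ⋃ i ∈ (Y : Set (Fin m)), (A i : Set V) := by
      rw [Finset.coe_union, Set.biUnion_union]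
    have hi : Submodule.span F (⋃ i ∈ ((X ∩ Y : Finset (Fin m)) : Set (Fin m)), (A i : Set V))
        ≤ (Submodule.span F (⋃ i ∈ (X : Set (Fin m)), (A i : Set V)))
          ⊓ (Submodule.span F (⋃ i ∈ (Y : Set (Fin m)), (A i : Set V))) := by
      refine le_inf (Submodule.span_mono ?_) (Submodule.span_mono ?_) <;>
        exact Set.biUnion_subset_biUnion_left (by simp [Finset.coe_inter])
    rw [hu, Submodule.span_union]
    have key := Submodule.finrank_sup_add_finrank_inf_eq
      (Submodule.span F (⋃ i ∈ (X : Set (Fin m)), (A i : Set V)))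
      (Submodule.span F (⋃ i ∈ (Y : Set (Fin m)), (A i : Set V)))
    have hle : Module.finrank F (Submodule.span F
        (⋃ i ∈ ((X ∩ Y : Finset (Fin m)) : Set (Fin m)), (A i : Set V)))
        ≤ Module.finrank F ↥((Submodule.span F (⋃ i ∈ (X : Set (Fin m)), (A i : Set V)))
          ⊓ (Submodule.span F (⋃ i ∈ (Y : Set (Fin m)), (A i : Set V)))) :=
      Submodule.finrank_mono hi
    omega
  linarith

end helpers

theorem stmt_14 {F V : Type*} [Field F] [AddCommGroup V] [Module F V]
    [FiniteDimensional F V] {m : ℕ} [NeZero m] (A : Fin m → Finset V)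
    (rank : Finset (Fin m) → ℤ)
    (hrank : ∀ S : Finset (Fin m),
      rank S = (Module.finrank F
        (Submodule.span F (⋃ i ∈ (S : Set (Fin m)), (A i : Set V))) : ℤ))
    (N : ℤ) (hN : N = rank Finset.univ)
    (u : Fin m) (σ : Equiv.Perm (Fin m)) (hσ : σ 0 = u)
    (R : Fin m → ℤ)
    (hR : ∀ t : Fin m, t ≠ 0 →
      R (σ t) = rank ((Finset.univ.filter (· ≤ t)).image σ)
        - rank ((Finset.univ.filter (· < t)).image σ)) :
    (∀ t : Fin m, t ≠ 0 →
      ∑ s ∈ Finset.univ.filter (t ≤ ·), R (σ s)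
        = N - rank ((Finset.univ.filter (· < t)).image σ)) ∧
    (∀ S : Finset (Fin m), u ∉ S →
      N - rank (Finset.univ \ S) ≤ ∑ i ∈ S, R i) := by
  classical
  have himguniv : Finset.image (⇑σ) Finset.univ = Finset.univ := by
    ext x; simp only [Finset.mem_image, Finset.mem_univ, iff_true]
    exact ⟨σ.symm x, by simp⟩
  constructor
  · -- Part 1: telescoping identity
    intro t ht
    set Fn : ℕ → ℤ :=
      fun n => rank ((Finset.univ.filter (fun r : Fin m => (r : ℕ) < n)).image σ) with hFn
    have hstep : ∀ s ∈ Finset.univ.filter (t ≤ ·), R (σ s) = Fn (s.val + 1) - Fn s.val := by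
      intro s hs
      simp only [Finset.mem_filter] at hs
      have hs0 : s ≠ 0 := by
        intro h
        exact ht (le_antisymm (h ▸ hs.2) (Fin.zero_le t))
      rw [hR s hs0]
      have e1 : (Finset.univ.filter (· ≤ s)) = Finset.univ.filter (fun r : Fin m => (r : ℕ) < s.val + 1) := by
        ext r
        simp only [Finset.mem_filter, Finset.mem_univ, true_and, Fin.le_def, Nat.lt_succ_iff]
      have e2 : (Finset.univ.filter (· < s)) = Finset.univ.filter (fun r : Fin m => (r : ℕ) < s.val) := by
        ext r
        simp only [Finset.mem_filter, Finset.mem_univ, true_and, Fin.lt_def]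
      rw [e1, e2]
    rw [Finset.sum_congr rfl hstep]
    have h1 : ∑ s ∈ Finset.univ.filter (t ≤ ·), (Fn (s.val + 1) - Fn s.val)
        = ∑ i ∈ Finset.Ico t.val m, (Fn (i + 1) - Fn i) := by
      calc ∑ s ∈ Finset.univ.filter (t ≤ ·), (Fn (s.val + 1) - Fn s.val)
          = ∑ s : Fin m, (if t.val ≤ (s : ℕ) then Fn ((s : ℕ) + 1) - Fn (s : ℕ) else 0) := by
            rw [Finset.sum_filter]
            exact Finset.sum_congr rfl (fun s _ => by simp only [Fin.le_def])
        _ = ∑ i ∈ Finset.range m, (if t.val ≤ i then Fn (i + 1) - Fn i else 0) :=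
            Fin.sum_univ_eq_sum_range (fun i => if t.val ≤ i then Fn (i + 1) - Fn i else 0) m
        _ = ∑ i ∈ (Finset.range m).filter (fun i => t.val ≤ i), (Fn (i + 1) - Fn i) :=
            (Finset.sum_filter _ _).symm
        _ = ∑ i ∈ Finset.Ico t.val m, (Fn (i + 1) - Fn i) := by
            congr 1
            ext i
            simp only [Finset.mem_filter, Finset.mem_range, Finset.mem_Ico]
            omega
    rw [h1, Finset.sum_Ico_eq_sub _ t.isLt.le, Finset.sum_range_sub, Finset.sum_range_sub]
    have hm : Fn m = N := by
      have e : Finset.univ.filter (fun r : Fin m => (r : ℕ) < m) = Finset.univ :=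
        Finset.filter_true_of_mem (fun r _ => r.isLt)
      show rank ((Finset.univ.filter (fun r : Fin m => (r : ℕ) < m)).image σ) = N
      rw [e, himguniv, hN]
    have ht' : Fn t.val = rank ((Finset.univ.filter (· < t)).image σ) := by
      show rank ((Finset.univ.filter (fun r : Fin m => (r : ℕ) < t.val)).image σ) = _
      have e : Finset.univ.filter (fun r : Fin m => (r : ℕ) < t.val)
          = Finset.univ.filter (· < t) := by
        ext r
        simp only [Finset.mem_filter, Finset.mem_univ, true_and, Fin.lt_def]
      rw [e]
    rw [hm, ht']
    ring
  · -- Part 2: cut-set constraints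
    intro S hS
    set T : Finset (Fin m) := Finset.univ.filter (fun r => σ r ∈ S) with hT
    have hTS : T.image σ = S := by
      ext x
      simp only [hT, Finset.mem_image, Finset.mem_filter, Finset.mem_univ, true_and]
      constructor
      · rintro ⟨r, hr, rfl⟩; exact hr
      · intro hx; exact ⟨σ.symm x, by simp [hx], by simp⟩
    have h0T : (0 : Fin m) ∉ T := by simp [hT, hσ, hS]
    set B : Finset (Fin m) := Finset.univ \ S with hB
    set f : ℕ → ℤ :=
      fun n => rank (B ∪ (T.filter (fun r : Fin m => (r : ℕ) < n)).image σ) with hf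
    have hstep : ∀ s : Fin m, f (s.val + 1) - f s.val ≤ (if s ∈ T then R (σ s) else 0) := by
      intro s
      by_cases hsT : s ∈ T
      · simp only [hsT, if_true]
        have hs0 : s ≠ 0 := fun h => h0T (h ▸ hsT)
        rw [hR s hs0]
        have key := rank_pair' hrank
          (X := (Finset.univ.filter (· ≤ s)).image σ)
          (Y := B ∪ (T.filter (fun r : Fin m => (r : ℕ) < s.val)).image σ)
          (Z := B ∪ (T.filter (fun r : Fin m => (r : ℕ) < s.val + 1)).image σ)
          (W := (Finset.univ.filter (· < s)).image σ)
          ?_ ?_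
        · simp only [hf]
          linarith
        · -- Z ⊆ X ∪ Y
          intro x hx
          rw [Finset.mem_union] at hx ⊢
          rcases hx with hx | hx
          · exact Or.inr (Finset.mem_union_left _ hx)
          · obtain ⟨r, hr, rfl⟩ := Finset.mem_image.mp hx
            rw [Finset.mem_filter] at hr
            refine Or.inl (Finset.mem_image.mpr ⟨r, ?_, rfl⟩)
            rw [Finset.mem_filter]
            exact ⟨Finset.mem_univ _, Fin.le_def.mpr (Nat.lt_succ_iff.mp hr.2)⟩
        · -- W ⊆ X ∩ Y
          intro x hx
          obtain ⟨r, hr, rfl⟩ := Finset.mem_image.mp hx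
          rw [Finset.mem_filter] at hr
          rw [Finset.mem_inter]
          constructor
          · exact Finset.mem_image.mpr ⟨r, Finset.mem_filter.mpr
              ⟨Finset.mem_univ _, le_of_lt hr.2⟩, rfl⟩
          · rw [Finset.mem_union]
            by_cases hrs : σ r ∈ S
            · refine Or.inr (Finset.mem_image.mpr ⟨r, ?_, rfl⟩)
              rw [Finset.mem_filter]
              exact ⟨Finset.mem_filter.mpr ⟨Finset.mem_univ _, hrs⟩, Fin.lt_def.mp hr.2⟩
            · exact Or.inl (Finset.mem_sdiff.mpr ⟨Finset.mem_univ _, hrs⟩)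
      · simp only [hsT, if_false]
        have : T.filter (fun r : Fin m => (r : ℕ) < s.val + 1) = T.filter (fun r : Fin m => (r : ℕ) < s.val) := by
          ext r
          simp only [Finset.mem_filter]
          constructor
          · rintro ⟨h1, h2⟩
            refine ⟨h1, ?_⟩
            rcases Nat.lt_succ_iff_lt_or_eq.mp h2 with h | h
            · exact h
            · exact absurd (Fin.val_injective h ▸ h1) hsT
          · rintro ⟨h1, h2⟩; exact ⟨h1, Nat.lt_succ_of_lt h2⟩
        simp only [hf, this, sub_self, le_refl]
    have hsum : ∑ i ∈ S, R i = ∑ s ∈ T, R (σ s) := by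
      rw [← hTS, Finset.sum_image (fun a _ b _ h => σ.injective h)]
    have h2 : ∑ s ∈ T, R (σ s) = ∑ s : Fin m, (if s ∈ T then R (σ s) else 0) := by
      rw [Finset.sum_ite_mem, Finset.univ_inter]
    have h3 : ∑ s : Fin m, (f (s.val + 1) - f s.val)
        ≤ ∑ s : Fin m, (if s ∈ T then R (σ s) else 0) :=
      Finset.sum_le_sum (fun s _ => hstep s)
    have h4 : ∑ s : Fin m, (f (s.val + 1) - f s.val) = f m - f 0 := by
      rw [Fin.sum_univ_eq_sum_range (fun i => f (i + 1) - f i) m, Finset.sum_range_sub]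
    have hfm : f m = N := by
      have e : T.filter (fun r : Fin m => (r : ℕ) < m) = T :=
        Finset.filter_true_of_mem (fun r _ => r.isLt)
      show rank (B ∪ (T.filter (fun r : Fin m => (r : ℕ) < m)).image σ) = N
      rw [e, hTS]
      rw [show B = Finset.univ \ S from rfl,
        Finset.sdiff_union_of_subset (Finset.subset_univ S), hN]
    have hf0 : f 0 = rank B := by
      have e : T.filter (fun r : Fin m => (r : ℕ) < 0) = ∅ := by
        ext r; simp
      show rank (B ∪ (T.filter (fun r : Fin m => (r : ℕ) < 0)).image σ) = rank B
      rw [e, Finset.image_empty, Finset.union_empty]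
    rw [hsum, h2]
    have : B = Finset.univ \ S := rfl
    rw [this] at hf0
    linarith [h3, h4]
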